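/- Let G be the group ⟨a, b | a b a b^{-1} a^{-1} b a b = b a b a^{-1} b^{-1} a b a, (b a b^{-1} a^{-1} b^{-1} a b a^{-1})^n a^m = 1⟩ with m ≥ 2n ≥ 2. If a ≠ 1 in G, then a is a generalized torsion element of G. -/

import Mathlib

/-- A generalized torsion element: a non-identity element some non-empty finite
product of whose conjugates is the identity. -/
def IsGenTorsion {G : Type*} [Group G] (g : G) : Prop :=
  g ≠ 1 ∧ ∃ l : List G, l ≠ [] ∧ (∀ x ∈ l, ∃ v : G, x = v⁻¹ * g * v) ∧ l.prod = 1

/-- The two relators of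
⟨a, b | a b a b⁻¹ a⁻¹ b a b = b a b a⁻¹ b⁻¹ a b a, (b a b⁻¹ a⁻¹ b⁻¹ a b a⁻¹)ⁿ aᵐ = 1⟩,
with `a = FreeGroup.of 0`, `b = FreeGroup.of 1`. -/
def whiteheadRels (m n : ℕ) : Set (FreeGroup (Fin 2)) :=
  let a : FreeGroup (Fin 2) := FreeGroup.of 0
  let b : FreeGroup (Fin 2) := FreeGroup.of 1
  { (a * b * a * b⁻¹ * a⁻¹ * b * a * b) * (b * a * b * a⁻¹ * b⁻¹ * a * b * a)⁻¹,
    (b * a * b⁻¹ * a⁻¹ * b⁻¹ * a * b * a⁻¹) ^ n * a ^ m }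

lemma genTorsion_of_rel {G : Type*} [Group G] (A B : G) (m n : ℕ) (hn : 1 ≤ n)
    (hm : 2 * n ≤ m)
    (hrel : (B * A * B⁻¹ * A⁻¹ * B⁻¹ * A * B * A⁻¹) ^ n * A ^ m = 1) (hA : A ≠ 1) :
    A ≠ 1 ∧ ∃ l : List G, l ≠ [] ∧ (∀ x ∈ l, ∃ v : G, x = v⁻¹ * A * v) ∧ l.prod = 1 := by
  set w : G := B * A * B⁻¹ * A⁻¹ * B⁻¹ * A * B * A⁻¹ with hw
  refine ⟨hA, ((List.range n).flatMap fun i =>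
      [(B⁻¹ * A ^ (2*i))⁻¹ * A * (B⁻¹ * A ^ (2*i)),
       (B * A ^ (2*i+1))⁻¹ * A * (B * A ^ (2*i+1))]) ++ List.replicate (m - 2*n) A,
    ?_, ?_, ?_⟩
  · refine List.ne_nil_of_mem (a := (B⁻¹ * A ^ (2*0))⁻¹ * A * (B⁻¹ * A ^ (2*0))) ?_
    refine List.mem_append_left _ (List.mem_flatMap.mpr ⟨0, ?_, ?_⟩) <;>
      simp [List.mem_range]; omega
  · intro x hx
    simp only [List.mem_append, List.mem_flatMap, List.mem_replicate, List.mem_range] at hx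
    rcases hx with ⟨i, _, hx⟩ | ⟨_, rfl⟩
    · simp only [List.mem_cons, List.mem_singleton, List.not_mem_nil, or_false] at hx
      rcases hx with rfl | rfl
      exacts [⟨B⁻¹ * A ^ (2*i), rfl⟩, ⟨B * A ^ (2*i+1), rfl⟩]
    · exact ⟨1, by simp⟩
  · have key : ∀ k : ℕ, ((List.range k).flatMap fun i =>
        [(B⁻¹ * A ^ (2*i))⁻¹ * A * (B⁻¹ * A ^ (2*i)),
         (B * A ^ (2*i+1))⁻¹ * A * (B * A ^ (2*i+1))]).prod = w ^ k * A ^ (2*k) := by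
      intro k
      induction k with
      | zero => simp
      | succ k ih =>
        rw [List.range_succ, List.flatMap_append, List.prod_append, ih]
        simp only [List.flatMap_cons, List.flatMap_nil, List.append_nil, List.prod_cons,
          List.prod_nil, mul_one]
        rw [pow_succ w k, hw]
        have h1 : 2 * (k+1) = 2*k + 2 := by ring
        rw [h1, pow_add, pow_add]
        group
    rw [List.prod_append, key n, List.prod_replicate]
    have hA2 : A ^ (2*n) * A ^ (m - 2*n) = A ^ m := by
      rw [← pow_add]; congr 1; omega
    rw [mul_assoc, hA2, hrel]

lemma whitehead_rel_holds (m n : ℕ) :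
    ((PresentedGroup.of 1 : PresentedGroup (whiteheadRels m n)) * PresentedGroup.of 0 *
      (PresentedGroup.of 1)⁻¹ * (PresentedGroup.of 0)⁻¹ * (PresentedGroup.of 1)⁻¹ *
      PresentedGroup.of 0 * PresentedGroup.of 1 * (PresentedGroup.of 0)⁻¹) ^ n *
      (PresentedGroup.of 0 : PresentedGroup (whiteheadRels m n)) ^ m = 1 := by
  have hr : ((FreeGroup.of 1 * FreeGroup.of 0 * (FreeGroup.of 1)⁻¹ * (FreeGroup.of 0)⁻¹ *
      (FreeGroup.of 1)⁻¹ * FreeGroup.of 0 * FreeGroup.of 1 * (FreeGroup.of 0)⁻¹) ^ n *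
      (FreeGroup.of 0 : FreeGroup (Fin 2)) ^ m) ∈ whiteheadRels m n := by
    simp [whiteheadRels]
  have h1 : PresentedGroup.mk (whiteheadRels m n)
      ((FreeGroup.of 1 * FreeGroup.of 0 * (FreeGroup.of 1)⁻¹ * (FreeGroup.of 0)⁻¹ *
      (FreeGroup.of 1)⁻¹ * FreeGroup.of 0 * FreeGroup.of 1 * (FreeGroup.of 0)⁻¹) ^ n *
      (FreeGroup.of 0 : FreeGroup (Fin 2)) ^ m) = 1 :=
    (QuotientGroup.eq_one_iff _).mpr (Subgroup.subset_normalClosure hr)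
  simpa [map_mul, map_pow, map_inv, PresentedGroup.of] using h1

/-- If m ≥ 2n ≥ 2 and a ≠ 1 in G, then a is a generalized torsion element of G. -/
theorem whitehead_filling_genTorsion (m n : ℕ) (hn : 1 ≤ n) (hm : 2 * n ≤ m)
    (ha : (PresentedGroup.of 0 : PresentedGroup (whiteheadRels m n)) ≠ 1) :
    IsGenTorsion (PresentedGroup.of 0 : PresentedGroup (whiteheadRels m n)) :=
  genTorsion_of_rel (PresentedGroup.of 0) (PresentedGroup.of 1) m n hn hm
    (whitehead_rel_holds m n) ha
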